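/- arXiv:2509.13653 — 3 statements merged into one kernel-verified Lean document; each statement's English description precedes it below -/
import Mathlib

section
/- Let σ* = (x*, y*) be a Nash equilibrium of the game given by U, and suppose C > 0 satisfies the metric subregularity bound C·‖σ* − σ‖₂ ≤ ε(σ) for every σ ∈ Δ^n × Δ^m. Fix μ > 0 and define a sequence of profiles by choosing any σ^{r,1} ∈ Δ^n × Δ^m, letting σ^{*,1} be a saddle point of the SCCP with reference σ^{r,1}, and for each n ≥ 2 letting σ^{*,n} be a saddle point of the SCCP with reference σ^{*,n−1}. Then ‖σ* − σ^{*,n}‖₂ → 0 as n → ∞, i.e., the saddle-point sequence converges to the Nash equilibrium σ*. -/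
open Finset

/-- Squared Euclidean norm of a vector. -/
noncomputable def sqnorm {k : ℕ} (v : Fin k → ℝ) : ℝ := ∑ i, (v i) ^ 2

/-- Euclidean norm of a concatenated profile vector in ℝ^(k+l). -/
noncomputable def pnorm {k l : ℕ} (v : Fin k → ℝ) (w : Fin l → ℝ) : ℝ :=
  Real.sqrt (sqnorm v + sqnorm w)

/-- Bilinear payoff xᵀUy. -/
def payoff {k l : ℕ} (U : Matrix (Fin k) (Fin l) ℝ) (x : Fin k → ℝ) (y : Fin l → ℝ) : ℝ :=
  ∑ i, ∑ j, x i * U i j * y j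

/-- Regularized SCCP objective G(x,y) = -xᵀUy + μ/2 ‖x - xʳ‖² - μ/2 ‖y - yʳ‖². -/
noncomputable def sccpObj {k l : ℕ} (U : Matrix (Fin k) (Fin l) ℝ) (μ : ℝ)
    (xr : Fin k → ℝ) (yr : Fin l → ℝ) (x : Fin k → ℝ) (y : Fin l → ℝ) : ℝ :=
  -(payoff U x y) + μ / 2 * sqnorm (x - xr) - μ / 2 * sqnorm (y - yr)

/-- (x̂, ŷ) is a saddle point of the SCCP with weight μ and reference (xr, yr). -/
def IsSaddle {k l : ℕ} (U : Matrix (Fin k) (Fin l) ℝ) (μ : ℝ)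
    (xr : Fin k → ℝ) (yr : Fin l → ℝ) (xh : Fin k → ℝ) (yh : Fin l → ℝ) : Prop :=
  xh ∈ stdSimplex ℝ (Fin k) ∧ yh ∈ stdSimplex ℝ (Fin l) ∧
  (∀ y ∈ stdSimplex ℝ (Fin l), sccpObj U μ xr yr xh y ≤ sccpObj U μ xr yr xh yh) ∧
  (∀ x ∈ stdSimplex ℝ (Fin k), sccpObj U μ xr yr xh yh ≤ sccpObj U μ xr yr x yh)

/-- (x*, y*) is a Nash equilibrium of the zero-sum game with payoff matrix U. -/
def IsNash {k l : ℕ} (U : Matrix (Fin k) (Fin l) ℝ)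
    (xs : Fin k → ℝ) (ys : Fin l → ℝ) : Prop :=
  xs ∈ stdSimplex ℝ (Fin k) ∧ ys ∈ stdSimplex ℝ (Fin l) ∧
  (∀ x ∈ stdSimplex ℝ (Fin k), payoff U x ys ≤ payoff U xs ys) ∧
  (∀ y ∈ stdSimplex ℝ (Fin l), payoff U xs ys ≤ payoff U xs y)

/-- Exploitability ε(σ) = max_{x'} x'ᵀUy - min_{y'} xᵀUy'. -/
noncomputable def exploit {k l : ℕ} (U : Matrix (Fin k) (Fin l) ℝ)
    (x : Fin k → ℝ) (y : Fin l → ℝ) : ℝ :=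
  sSup ((fun x' => payoff U x' y) '' stdSimplex ℝ (Fin k)) -
  sInf ((fun y' => payoff U x y') '' stdSimplex ℝ (Fin l))

/-- Transformed loss for the x-player: ℓ_x = -Uy + μ(x - xʳ). -/
noncomputable def lossX {k l : ℕ} (U : Matrix (Fin k) (Fin l) ℝ) (μ : ℝ)
    (xr : Fin k → ℝ) (x : Fin k → ℝ) (y : Fin l → ℝ) : Fin k → ℝ :=
  fun i => -(∑ j, U i j * y j) + μ * (x i - xr i)

/-- Transformed loss for the y-player: ℓ_y = Uᵀx + μ(y - yʳ). -/
noncomputable def lossY {k l : ℕ} (U : Matrix (Fin k) (Fin l) ℝ) (μ : ℝ)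
    (yr : Fin l → ℝ) (x : Fin k → ℝ) (y : Fin l → ℝ) : Fin l → ℝ :=
  fun j => (∑ i, U i j * x i) + μ * (y j - yr j)

/-- Immediate regret r = ⟨ℓ, p⟩·𝟏 - ℓ. -/
noncomputable def imRegret {k : ℕ} (ℓ : Fin k → ℝ) (p : Fin k → ℝ) : Fin k → ℝ :=
  fun i => (∑ i', ℓ i' * p i') - ℓ i

-- auxiliary lemmas
lemma sqnorm_nonneg {k : ℕ} (v : Fin k → ℝ) : 0 ≤ sqnorm v :=
  Finset.sum_nonneg fun i _ => sq_nonneg _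

lemma foc_aux (S c : ℝ) (hc : 0 ≤ c) (h : ∀ t : ℝ, 0 < t → t ≤ 1 → 0 ≤ t * S + t ^ 2 * c) :
    0 ≤ S := by
  by_contra hS
  push_neg at hS
  set t : ℝ := min 1 (-S / (2 * c + 1)) with ht
  have hpos : 0 < -S / (2 * c + 1) := div_pos (by linarith) (by linarith)
  have ht0 : 0 < t := lt_min one_pos hpos
  have ht1 : t ≤ 1 := min_le_left _ _
  have ht2 : t ≤ -S / (2 * c + 1) := min_le_right _ _
  have := h t ht0 ht1
  have htc : t * c ≤ -S / 2 := by
    have h1 : t * (2 * c + 1) ≤ -S := by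
      rw [← le_div_iff₀ (by positivity)]; exact ht2
    nlinarith
  nlinarith

lemma sum_sq_expand {k : ℕ} (a b : Fin k → ℝ) (t : ℝ) :
    ∑ i, (a i + t * b i) ^ 2
      = ∑ i, (a i) ^ 2 + 2 * t * ∑ i, a i * b i + t ^ 2 * ∑ i, (b i) ^ 2 := by
  rw [Finset.mul_sum, Finset.mul_sum, ← Finset.sum_add_distrib, ← Finset.sum_add_distrib]
  exact Finset.sum_congr rfl fun i _ => by ring

lemma payoff_left_lin {k l : ℕ} (U : Matrix (Fin k) (Fin l) ℝ) (x d : Fin k → ℝ)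
    (y : Fin l → ℝ) (t : ℝ) :
    payoff U (fun i => x i + t * d i) y = payoff U x y + t * payoff U d y := by
  unfold payoff
  rw [Finset.mul_sum, ← Finset.sum_add_distrib]
  refine Finset.sum_congr rfl fun i _ => ?_
  rw [Finset.mul_sum, ← Finset.sum_add_distrib]
  exact Finset.sum_congr rfl fun j _ => by ring

lemma payoff_right_lin {k l : ℕ} (U : Matrix (Fin k) (Fin l) ℝ) (x : Fin k → ℝ)
    (y e : Fin l → ℝ) (t : ℝ) :
    payoff U x (fun j => y j + t * e j) = payoff U x y + t * payoff U x e := by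
  unfold payoff
  rw [Finset.mul_sum, ← Finset.sum_add_distrib]
  refine Finset.sum_congr rfl fun i _ => ?_
  rw [Finset.mul_sum, ← Finset.sum_add_distrib]
  exact Finset.sum_congr rfl fun j _ => by ring

lemma payoff_eq_sum_left {k l : ℕ} (U : Matrix (Fin k) (Fin l) ℝ) (x : Fin k → ℝ)
    (y : Fin l → ℝ) : payoff U x y = ∑ i, x i * (∑ j, U i j * y j) := by
  unfold payoff
  refine Finset.sum_congr rfl fun i _ => ?_
  rw [Finset.mul_sum]
  exact Finset.sum_congr rfl fun j _ => by ring

lemma payoff_eq_sum_right {k l : ℕ} (U : Matrix (Fin k) (Fin l) ℝ) (x : Fin k → ℝ)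
    (y : Fin l → ℝ) : payoff U x y = ∑ j, (∑ i, U i j * x i) * y j := by
  unfold payoff
  rw [Finset.sum_comm]
  refine Finset.sum_congr rfl fun j _ => ?_
  rw [Finset.sum_mul]
  exact Finset.sum_congr rfl fun i _ => by ring

lemma simplex_entry_le_one {k : ℕ} {x : Fin k → ℝ} (hx : x ∈ stdSimplex ℝ (Fin k)) (i : Fin k) :
    x i ≤ 1 := by
  rw [← hx.2]
  exact Finset.single_le_sum (fun j _ => hx.1 j) (Finset.mem_univ i)

lemma sqnorm_diff_le_two {k : ℕ} {x y : Fin k → ℝ}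
    (hx : x ∈ stdSimplex ℝ (Fin k)) (hy : y ∈ stdSimplex ℝ (Fin k)) :
    sqnorm (x - y) ≤ 2 := by
  have h1 : sqnorm (x - y) ≤ ∑ i, (x i + y i) := by
    refine Finset.sum_le_sum fun i _ => ?_
    have hxi := hx.1 i; have hyi := hy.1 i
    have hx1 := simplex_entry_le_one hx i; have hy1 := simplex_entry_le_one hy i
    simp only [Pi.sub_apply]
    nlinarith
  calc sqnorm (x - y) ≤ ∑ i, (x i + y i) := h1
    _ = 2 := by rw [Finset.sum_add_distrib, hx.2, hy.2]; norm_num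

lemma le_sqrt_of_sq_le {x s : ℝ} (h : x ^ 2 ≤ s) : x ≤ Real.sqrt s := by
  rcases le_or_gt x 0 with h0 | h0
  · exact h0.trans (Real.sqrt_nonneg s)
  · calc x = Real.sqrt (x ^ 2) := (Real.sqrt_sq h0.le).symm
      _ ≤ Real.sqrt s := Real.sqrt_le_sqrt h

/-- Variational inequality for the x-player at a saddle point. -/
lemma saddle_vi_x {k l : ℕ} {U : Matrix (Fin k) (Fin l) ℝ} {μ : ℝ} (hμ : 0 < μ)
    {xr : Fin k → ℝ} {yr : Fin l → ℝ} {xh : Fin k → ℝ} {yh : Fin l → ℝ}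
    (hsad : IsSaddle U μ xr yr xh yh) (x : Fin k → ℝ) (hx : x ∈ stdSimplex ℝ (Fin k)) :
    0 ≤ ∑ i, (-(∑ j, U i j * yh j) + μ * (xh i - xr i)) * (x i - xh i) := by
  set d : Fin k → ℝ := fun i => x i - xh i with hd
  set S : ℝ := ∑ i, (-(∑ j, U i j * yh j) + μ * (xh i - xr i)) * (x i - xh i) with hS
  have hS' : S = -(payoff U d yh) + μ * ∑ i, (xh i - xr i) * d i := by
    rw [hS, payoff_eq_sum_left, ← Finset.sum_neg_distrib, Finset.mul_sum,
      ← Finset.sum_add_distrib]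
    exact Finset.sum_congr rfl fun i _ => by simp [hd]; ring
  refine foc_aux S (μ / 2 * sqnorm d) (mul_nonneg (by positivity) (sqnorm_nonneg d)) fun t ht0 ht1 => ?_
  -- the perturbed point
  have hxt : (fun i => xh i + t * d i) ∈ stdSimplex ℝ (Fin k) := by
    have := (convex_stdSimplex ℝ (Fin k)) hsad.1 hx (by linarith : (0:ℝ) ≤ 1 - t) ht0.le
      (by ring)
    convert this using 1
    funext i
    simp [hd, smul_eq_mul]
    ring
  have hle := hsad.2.2.2 _ hxt
  have hexp : sccpObj U μ xr yr (fun i => xh i + t * d i) yh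
      = sccpObj U μ xr yr xh yh + (t * S + t ^ 2 * (μ / 2 * sqnorm d)) := by
    unfold sccpObj
    rw [payoff_left_lin]
    have h2 : sqnorm ((fun i => xh i + t * d i) - xr)
        = sqnorm (xh - xr) + 2 * t * ∑ i, (xh i - xr i) * d i + t ^ 2 * sqnorm d := by
      have : ((fun i => xh i + t * d i) - xr) = fun i => (xh i - xr i) + t * d i := by
        funext i; simp; ring
      rw [this]
      exact sum_sq_expand (fun i => xh i - xr i) d t
    rw [h2, hS']
    unfold sqnorm
    ring
  rw [hexp] at hle
  linarith

/-- Variational inequality for the y-player at a saddle point. -/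
lemma saddle_vi_y {k l : ℕ} {U : Matrix (Fin k) (Fin l) ℝ} {μ : ℝ} (hμ : 0 < μ)
    {xr : Fin k → ℝ} {yr : Fin l → ℝ} {xh : Fin k → ℝ} {yh : Fin l → ℝ}
    (hsad : IsSaddle U μ xr yr xh yh) (y : Fin l → ℝ) (hy : y ∈ stdSimplex ℝ (Fin l)) :
    0 ≤ ∑ j, ((∑ i, U i j * xh i) + μ * (yh j - yr j)) * (y j - yh j) := by
  set e : Fin l → ℝ := fun j => y j - yh j with he
  set S : ℝ := ∑ j, ((∑ i, U i j * xh i) + μ * (yh j - yr j)) * (y j - yh j) with hS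
  have hS' : S = payoff U xh e + μ * ∑ j, (yh j - yr j) * e j := by
    rw [hS, payoff_eq_sum_right, Finset.mul_sum, ← Finset.sum_add_distrib]
    exact Finset.sum_congr rfl fun j _ => by simp [he]; ring
  refine foc_aux S (μ / 2 * sqnorm e) (mul_nonneg (by positivity) (sqnorm_nonneg e)) fun t ht0 ht1 => ?_
  have hyt : (fun j => yh j + t * e j) ∈ stdSimplex ℝ (Fin l) := by
    have := (convex_stdSimplex ℝ (Fin l)) hsad.2.1 hy (by linarith : (0:ℝ) ≤ 1 - t) ht0.le
      (by ring)
    convert this using 1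
    funext j
    simp [he, smul_eq_mul]
    ring
  have hle := hsad.2.2.1 _ hyt
  have hexp : sccpObj U μ xr yr xh (fun j => yh j + t * e j)
      = sccpObj U μ xr yr xh yh - (t * S + t ^ 2 * (μ / 2 * sqnorm e)) := by
    unfold sccpObj
    rw [payoff_right_lin]
    have h2 : sqnorm ((fun j => yh j + t * e j) - yr)
        = sqnorm (yh - yr) + 2 * t * ∑ j, (yh j - yr j) * e j + t ^ 2 * sqnorm e := by
      have : ((fun j => yh j + t * e j) - yr) = fun j => (yh j - yr j) + t * e j := by
        funext j; simp; ring
      rw [this]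
      exact sum_sq_expand (fun j => yh j - yr j) e t
    rw [h2, hS']
    unfold sqnorm
    ring
  rw [hexp] at hle
  linarith

lemma saddle_payoff_bound {k l : ℕ} {U : Matrix (Fin k) (Fin l) ℝ} {μ : ℝ} (hμ : 0 < μ)
    {xr : Fin k → ℝ} {yr : Fin l → ℝ} {xh : Fin k → ℝ} {yh : Fin l → ℝ}
    (hsad : IsSaddle U μ xr yr xh yh)
    (x' : Fin k → ℝ) (hx' : x' ∈ stdSimplex ℝ (Fin k))
    (y' : Fin l → ℝ) (hy' : y' ∈ stdSimplex ℝ (Fin l)) :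
    payoff U x' yh - payoff U xh y'
      ≤ μ * (∑ i, (xh i - xr i) * (x' i - xh i) + ∑ j, (yh j - yr j) * (y' j - yh j)) := by
  have hvx := saddle_vi_x hμ hsad x' hx'
  have hvy := saddle_vi_y hμ hsad y' hy'
  have e1 : ∑ i, (-(∑ j, U i j * yh j) + μ * (xh i - xr i)) * (x' i - xh i)
      = -(payoff U x' yh) + payoff U xh yh + μ * ∑ i, (xh i - xr i) * (x' i - xh i) := by
    rw [payoff_eq_sum_left U x' yh, payoff_eq_sum_left U xh yh, Finset.mul_sum,
      ← Finset.sum_neg_distrib, ← Finset.sum_add_distrib, ← Finset.sum_add_distrib]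
    exact Finset.sum_congr rfl fun i _ => by ring
  have e2 : ∑ j, ((∑ i, U i j * xh i) + μ * (yh j - yr j)) * (y' j - yh j)
      = payoff U xh y' - payoff U xh yh + μ * ∑ j, (yh j - yr j) * (y' j - yh j) := by
    rw [payoff_eq_sum_right U xh y', payoff_eq_sum_right U xh yh, Finset.mul_sum,
      ← Finset.sum_sub_distrib, ← Finset.sum_add_distrib]
    exact Finset.sum_congr rfl fun j _ => by ring
  rw [e1] at hvx
  rw [e2] at hvy
  linarith

lemma sqnorm_parallelogram {k : ℕ} (r b s : Fin k → ℝ) :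
    sqnorm (b - r) = sqnorm (s - r) - sqnorm (s - b) - 2 * ∑ i, (b i - r i) * (s i - b i) := by
  unfold sqnorm
  rw [Finset.mul_sum, ← Finset.sum_sub_distrib, ← Finset.sum_sub_distrib]
  exact Finset.sum_congr rfl fun i _ => by simp only [Pi.sub_apply]; ring

/-- One-step contraction of squared distance to the Nash equilibrium. -/
lemma contraction_step {n m : ℕ}
    {U : Matrix (Fin n) (Fin m) ℝ} {μ : ℝ} (hμ : 0 < μ)
    {xs : Fin n → ℝ} {ys : Fin m → ℝ} (hNE : IsNash U xs ys)
    {C : ℝ} (hC : 0 < C)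
    (hMS : ∀ x ∈ stdSimplex ℝ (Fin n), ∀ y ∈ stdSimplex ℝ (Fin m),
      C * pnorm (xs - x) (ys - y) ≤ exploit U x y)
    {xr : Fin n → ℝ} {yr : Fin m → ℝ} {xh : Fin n → ℝ} {yh : Fin m → ℝ}
    (hsad : IsSaddle U μ xr yr xh yh) :
    sqnorm (xs - xh) + sqnorm (ys - yh)
      ≤ (8 * μ ^ 2 / (C ^ 2 + 8 * μ ^ 2)) * (sqnorm (xs - xr) + sqnorm (ys - yr)) := by
  set A : ℝ := sqnorm (xs - xr) + sqnorm (ys - yr) with hA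
  set B : ℝ := sqnorm (xs - xh) + sqnorm (ys - yh) with hB
  set R : ℝ := sqnorm (xh - xr) + sqnorm (yh - yr) with hR
  set P : ℝ := ∑ i, (xh i - xr i) * (xs i - xh i) + ∑ j, (yh j - yr j) * (ys j - yh j) with hP
  -- P ≥ 0 from the VI at the Nash equilibrium
  have hP0 : 0 ≤ P := by
    have hbd := saddle_payoff_bound hμ hsad xs hNE.1 ys hNE.2.1
    have h1 : payoff U xs ys ≤ payoff U xs yh := hNE.2.2.2 yh hsad.2.1
    have h2 : payoff U xh ys ≤ payoff U xs ys := hNE.2.2.1 xh hsad.1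
    have hμP : 0 ≤ μ * P := by rw [hP]; linarith
    nlinarith
  have hRAB : R = A - B - 2 * P := by
    rw [hR, hA, hB, hP, sqnorm_parallelogram xr xh xs, sqnorm_parallelogram yr yh ys]
    ring
  have hR0 : 0 ≤ R := by
    have := sqnorm_nonneg (xh - xr); have := sqnorm_nonneg (yh - yr); rw [hR]; linarith
  have hAB0 : 0 ≤ A - B := by linarith
  have hRle : R ≤ A - B := by linarith
  -- exploitability bound
  set M : ℝ := 2 * μ * Real.sqrt (2 * (A - B)) with hM
  have hM0 : 0 ≤ M := by
    rw [hM]; positivity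
  have hkey : ∀ x' ∈ stdSimplex ℝ (Fin n), ∀ y' ∈ stdSimplex ℝ (Fin m),
      payoff U x' yh - payoff U xh y' ≤ M := by
    intro x' hx' y' hy'
    have hbd := saddle_payoff_bound hμ hsad x' hx' y' hy'
    have hcs1 : ∑ i, (xh i - xr i) * (x' i - xh i) ≤ Real.sqrt (2 * (A - B)) := by
      apply le_sqrt_of_sq_le
      have := Finset.sum_mul_sq_le_sq_mul_sq Finset.univ (fun i => xh i - xr i)
        (fun i => x' i - xh i)
      have h2 : sqnorm (x' - xh) ≤ 2 := sqnorm_diff_le_two hx' hsad.1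
      have h3 : sqnorm (xh - xr) ≤ A - B := by
        have := sqnorm_nonneg (yh - yr); rw [hR] at hRle; linarith
      have h4 : (∑ i, (xh i - xr i) * (x' i - xh i)) ^ 2
          ≤ sqnorm (xh - xr) * sqnorm (x' - xh) := by
        simpa [sqnorm] using this
      have h5 : sqnorm (xh - xr) * sqnorm (x' - xh) ≤ (A - B) * 2 := by
        apply mul_le_mul h3 h2 (sqnorm_nonneg _) hAB0
      nlinarith
    have hcs2 : ∑ j, (yh j - yr j) * (y' j - yh j) ≤ Real.sqrt (2 * (A - B)) := by
      apply le_sqrt_of_sq_le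
      have := Finset.sum_mul_sq_le_sq_mul_sq Finset.univ (fun j => yh j - yr j)
        (fun j => y' j - yh j)
      have h2 : sqnorm (y' - yh) ≤ 2 := sqnorm_diff_le_two hy' hsad.2.1
      have h3 : sqnorm (yh - yr) ≤ A - B := by
        have := sqnorm_nonneg (xh - xr); rw [hR] at hRle; linarith
      have h4 : (∑ j, (yh j - yr j) * (y' j - yh j)) ^ 2
          ≤ sqnorm (yh - yr) * sqnorm (y' - yh) := by
        simpa [sqnorm] using this
      have h5 : sqnorm (yh - yr) * sqnorm (y' - yh) ≤ (A - B) * 2 := by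
        apply mul_le_mul h3 h2 (sqnorm_nonneg _) hAB0
      nlinarith
    calc payoff U x' yh - payoff U xh y'
        ≤ μ * (∑ i, (xh i - xr i) * (x' i - xh i)
            + ∑ j, (yh j - yr j) * (y' j - yh j)) := hbd
      _ ≤ μ * (2 * Real.sqrt (2 * (A - B))) := by
          apply mul_le_mul_of_nonneg_left _ hμ.le
          linarith
      _ = M := by rw [hM]; ring
  -- the exploitability is at most M
  have hexp : exploit U xh yh ≤ M := by
    unfold exploit
    have hS1ne : ((fun x' => payoff U x' yh) '' stdSimplex ℝ (Fin n)).Nonempty :=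
      ⟨payoff U xs yh, ⟨xs, hNE.1, rfl⟩⟩
    have hS2ne : ((fun y' => payoff U xh y') '' stdSimplex ℝ (Fin m)).Nonempty :=
      ⟨payoff U xh ys, ⟨ys, hNE.2.1, rfl⟩⟩
    rw [sub_le_iff_le_add]
    apply csSup_le hS1ne
    rintro a ⟨x', hx', rfl⟩
    have : payoff U x' yh - M ≤ sInf ((fun y' => payoff U xh y') '' stdSimplex ℝ (Fin m)) := by
      apply le_csInf hS2ne
      rintro b ⟨y', hy', rfl⟩
      have := hkey x' hx' y' hy'
      linarith
    linarith
  -- metric subregularity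
  have hms := hMS xh hsad.1 yh hsad.2.1
  have hpn : pnorm (xs - xh) (ys - yh) = Real.sqrt B := by rw [pnorm, hB]
  rw [hpn] at hms
  have hCB : C * Real.sqrt B ≤ M := le_trans hms hexp
  have hB0 : 0 ≤ B := by
    have := sqnorm_nonneg (xs - xh); have := sqnorm_nonneg (ys - yh); rw [hB]; linarith
  have hsq : (C * Real.sqrt B) ^ 2 ≤ M ^ 2 := by
    have h0 : 0 ≤ C * Real.sqrt B := mul_nonneg hC.le (Real.sqrt_nonneg B)
    nlinarith
  have e1 : (C * Real.sqrt B) ^ 2 = C ^ 2 * B := by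
    rw [mul_pow, Real.sq_sqrt hB0]
  have e2 : M ^ 2 = 8 * μ ^ 2 * (A - B) := by
    rw [hM, mul_pow, mul_pow, Real.sq_sqrt (by linarith : (0:ℝ) ≤ 2 * (A - B))]
    ring
  rw [e1, e2] at hsq
  rw [div_mul_eq_mul_div, le_div_iff₀ (by positivity)]
  nlinarith

/-- Asymptotic convergence of the SCCP saddle-point sequence to the Nash equilibrium. -/
theorem saddle_sequence_tendsto_nash
    {n m : ℕ} (hn : 0 < n) (hm : 0 < m)
    (U : Matrix (Fin n) (Fin m) ℝ) (μ : ℝ) (hμ : 0 < μ)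
    (xs : Fin n → ℝ) (ys : Fin m → ℝ) (hNE : IsNash U xs ys)
    (C : ℝ) (hC : 0 < C)
    (hMS : ∀ x ∈ stdSimplex ℝ (Fin n), ∀ y ∈ stdSimplex ℝ (Fin m),
      C * pnorm (xs - x) (ys - y) ≤ exploit U x y)
    (xr1 : Fin n → ℝ) (yr1 : Fin m → ℝ)
    (hxr1 : xr1 ∈ stdSimplex ℝ (Fin n)) (hyr1 : yr1 ∈ stdSimplex ℝ (Fin m))
    (sx : ℕ → Fin n → ℝ) (sy : ℕ → Fin m → ℝ)
    (hs1 : IsSaddle U μ xr1 yr1 (sx 1) (sy 1))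
    (hsn : ∀ k : ℕ, 2 ≤ k → IsSaddle U μ (sx (k - 1)) (sy (k - 1)) (sx k) (sy k)) :
    Filter.Tendsto (fun k : ℕ => pnorm (xs - sx k) (ys - sy k)) Filter.atTop (nhds 0) := by
  set q : ℝ := 8 * μ ^ 2 / (C ^ 2 + 8 * μ ^ 2) with hq
  have hq0 : 0 < q := by positivity
  have hq1 : q < 1 := by
    rw [hq, div_lt_one (by positivity)]
    nlinarith
  set D : ℕ → ℝ := fun k => sqnorm (xs - sx k) + sqnorm (ys - sy k) with hD
  have hD0 : ∀ k, 0 ≤ D k := fun k =>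
    add_nonneg (sqnorm_nonneg _) (sqnorm_nonneg _)
  have hD1 : D 1 ≤ 4 * q := by
    have h := contraction_step hμ hNE hC hMS hs1
    have hb : sqnorm (xs - xr1) + sqnorm (ys - yr1) ≤ 4 := by
      have h1 := sqnorm_diff_le_two hNE.1 hxr1
      have h2 := sqnorm_diff_le_two hNE.2.1 hyr1
      linarith
    calc D 1 ≤ q * (sqnorm (xs - xr1) + sqnorm (ys - yr1)) := h
      _ ≤ q * 4 := mul_le_mul_of_nonneg_left hb hq0.le
      _ = 4 * q := by ring
  have hstep : ∀ k : ℕ, 1 ≤ k → D (k + 1) ≤ q * D k := by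
    intro k hk
    have hsad := hsn (k + 1) (by omega)
    have hk1 : k + 1 - 1 = k := by omega
    rw [hk1] at hsad
    exact contraction_step hμ hNE hC hMS hsad
  have hgeo : ∀ k : ℕ, 1 ≤ k → D k ≤ 4 * q ^ k := by
    intro k hk
    induction k, hk using Nat.le_induction with
    | base => simpa [pow_one] using hD1
    | succ k hk ih =>
      calc D (k + 1) ≤ q * D k := hstep k hk
        _ ≤ q * (4 * q ^ k) := mul_le_mul_of_nonneg_left ih hq0.le
        _ = 4 * q ^ (k + 1) := by ring
  -- squeeze
  have hroot : ∀ k : ℕ, Real.sqrt (4 * q ^ k) = 2 * (Real.sqrt q) ^ k := by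
    intro k
    rw [show (4 : ℝ) * q ^ k = (2 * (Real.sqrt q) ^ k) ^ 2 by
      rw [mul_pow, ← pow_mul, mul_comm k 2, pow_mul, Real.sq_sqrt hq0.le]; ring]
    exact Real.sqrt_sq (by positivity)
  have hf : ∀ k : ℕ, 1 ≤ k → pnorm (xs - sx k) (ys - sy k) ≤ 2 * (Real.sqrt q) ^ k := by
    intro k hk
    rw [pnorm, ← hroot k]
    exact Real.sqrt_le_sqrt (hgeo k hk)
  have hsq1 : Real.sqrt q < 1 := by
    have : Real.sqrt q < Real.sqrt 1 := (Real.sqrt_lt_sqrt hq0.le hq1)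
    simpa using this
  have hg : Filter.Tendsto (fun k : ℕ => 2 * (Real.sqrt q) ^ k) Filter.atTop (nhds 0) := by
    have := tendsto_pow_atTop_nhds_zero_of_lt_one (Real.sqrt_nonneg q) hsq1
    simpa using this.const_mul 2
  refine squeeze_zero' ?_ ?_ hg
  · exact Filter.Eventually.of_forall fun k => Real.sqrt_nonneg _
  · exact Filter.eventually_atTop.2 ⟨1, hf⟩
end

section
/- Let K > 0 and let (a_n)_{n≥0} be a sequence of nonnegative real numbers such that for every n ≥ 1, a_n ≤ a_{n−1}, and whenever a_n > 0 one has a_{n−1} − a_n ≥ K/(a_{n−1} + a_n). Then a_n → 0 as n → ∞. -/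
/-- A nonincreasing nonnegative sequence whose decrements are bounded below by
K over the sum of consecutive terms (whenever the current term is positive)
converges to zero. -/
theorem seq_tendsto_zero (K : ℝ) (hK : 0 < K) (a : ℕ → ℝ)
    (hnonneg : ∀ k : ℕ, 0 ≤ a k)
    (hmono : ∀ k : ℕ, 1 ≤ k → a k ≤ a (k - 1))
    (hdec : ∀ k : ℕ, 1 ≤ k → 0 < a k → K / (a (k - 1) + a k) ≤ a (k - 1) - a k) :
    Filter.Tendsto a Filter.atTop (nhds 0) := by
  have hanti : Antitone a := by
    apply antitone_nat_of_succ_le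
    intro n
    have := hmono (n + 1) (by omega)
    simpa using this
  -- there exists N with a N = 0
  have hexN : ∃ N, a N = 0 := by
    by_contra h
    push_neg at h
    have hpos : ∀ n, 0 < a n := fun n => lt_of_le_of_ne (hnonneg n) (Ne.symm (h n))
    have hstep : ∀ k : ℕ, 1 ≤ k → a k ^ 2 + K ≤ a (k - 1) ^ 2 := by
      intro k hk
      have hsum : 0 < a (k - 1) + a k := by have := hpos k; have := hpos (k-1); linarith
      have := hdec k hk (hpos k)
      have h2 : K ≤ (a (k - 1) - a k) * (a (k - 1) + a k) := by
        rw [div_le_iff₀ hsum] at this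
        linarith [this]
      nlinarith
    have hiter : ∀ n : ℕ, a n ^ 2 + n * K ≤ a 0 ^ 2 := by
      intro n
      induction n with
      | zero => simp
      | succ m ih =>
        have := hstep (m + 1) (by omega)
        simp only [Nat.add_sub_cancel] at this
        push_cast
        nlinarith
    obtain ⟨n, hn⟩ := exists_nat_gt (a 0 ^ 2 / K)
    have := hiter n
    have hsq : 0 ≤ a n ^ 2 := sq_nonneg _
    have : (n : ℝ) * K ≤ a 0 ^ 2 := by linarith
    have : (n : ℝ) ≤ a 0 ^ 2 / K := (le_div_iff₀ hK).mpr this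
    linarith
  obtain ⟨N, hN⟩ := hexN
  have hev : ∀ᶠ n in Filter.atTop, a n = 0 := by
    filter_upwards [Filter.eventually_ge_atTop N] with n hn
    have h1 : a n ≤ a N := hanti hn
    have h2 : 0 ≤ a n := hnonneg n
    linarith [hN ▸ h1]
  exact Filter.Tendsto.congr' (hev.mono fun n h => h.symm) tendsto_const_nhds
end

section
/- Let σ* = (x*, y*) be a Nash equilibrium of the game given by U, and suppose C > 0 satisfies C·‖σ* − σ‖₂ ≤ ε(σ) for every σ ∈ Δ^n × Δ^m. Fix μ > 0 and let (σ^{r,n})_{n≥1} be a sequence of reference profiles with ε(σ^{r,n}) ≤ ε(σ^{r,n−1})/2 for all n ≥ 2, and for each n let σ^{*,n} be a saddle point of the SCCP with reference σ^{r,n}. Then for every n ≥ 1 and every profile σ ∈ Δ^n × Δ^m, ‖σ* − σ‖₂ ≤ ε(σ^{r,1})/(C·2^{n−1}) + ‖σ^{*,n} − σ‖₂. -/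
open Finset

noncomputable def dotp {k : ℕ} (u v : Fin k → ℝ) : ℝ := ∑ i, u i * v i

lemma sqnorm_eq_dotp {k : ℕ} (v : Fin k → ℝ) : sqnorm v = dotp v v :=
  Finset.sum_congr rfl fun i _ => by ring

lemma cs2 {k l : ℕ} (a c : Fin k → ℝ) (b d : Fin l → ℝ) :
    dotp a c + dotp b d ≤ pnorm a b * pnorm c d := by
  have h := Finset.sum_mul_sq_le_sq_mul_sq Finset.univ (Sum.elim a b) (Sum.elim c d)
  rw [Fintype.sum_sum_type, Fintype.sum_sum_type, Fintype.sum_sum_type] at h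
  simp only [Sum.elim_inl, Sum.elim_inr] at h
  have h2 : dotp a c + dotp b d ≤ Real.sqrt ((sqnorm a + sqnorm b) * (sqnorm c + sqnorm d)) := by
    calc dotp a c + dotp b d ≤ |dotp a c + dotp b d| := le_abs_self _
    _ = Real.sqrt ((dotp a c + dotp b d) ^ 2) := (Real.sqrt_sq_eq_abs _).symm
    _ ≤ Real.sqrt ((sqnorm a + sqnorm b) * (sqnorm c + sqnorm d)) := Real.sqrt_le_sqrt (by
        unfold dotp sqnorm; exact h)
  rwa [Real.sqrt_mul (add_nonneg (sqnorm_nonneg a) (sqnorm_nonneg b))] at h2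

lemma pnorm_nonneg {k l : ℕ} (v : Fin k → ℝ) (w : Fin l → ℝ) : 0 ≤ pnorm v w :=
  Real.sqrt_nonneg _

lemma pnorm_triangle {k l : ℕ} (a c : Fin k → ℝ) (b d : Fin l → ℝ) :
    pnorm (a + c) (b + d) ≤ pnorm a b + pnorm c d := by
  have hcs := cs2 a c b d
  have hle : sqnorm (a + c) + sqnorm (b + d) ≤ (pnorm a b + pnorm c d) ^ 2 := by
    have e1 : sqnorm (a + c) = sqnorm a + 2 * dotp a c + sqnorm c := by
      unfold sqnorm dotp
      rw [Finset.mul_sum, ← Finset.sum_add_distrib, ← Finset.sum_add_distrib]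
      exact Finset.sum_congr rfl fun i _ => by simp [Pi.add_apply]; ring
    have e2 : sqnorm (b + d) = sqnorm b + 2 * dotp b d + sqnorm d := by
      unfold sqnorm dotp
      rw [Finset.mul_sum, ← Finset.sum_add_distrib, ← Finset.sum_add_distrib]
      exact Finset.sum_congr rfl fun i _ => by simp [Pi.add_apply]; ring
    have p1 : pnorm a b ^ 2 = sqnorm a + sqnorm b :=
      Real.sq_sqrt (add_nonneg (sqnorm_nonneg _) (sqnorm_nonneg _))
    have p2 : pnorm c d ^ 2 = sqnorm c + sqnorm d :=
      Real.sq_sqrt (add_nonneg (sqnorm_nonneg _) (sqnorm_nonneg _))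
    nlinarith [hcs]
  calc pnorm (a + c) (b + d) = Real.sqrt (sqnorm (a+c) + sqnorm (b+d)) := rfl
  _ ≤ Real.sqrt ((pnorm a b + pnorm c d) ^ 2) := Real.sqrt_le_sqrt hle
  _ = |pnorm a b + pnorm c d| := Real.sqrt_sq_eq_abs _
  _ = pnorm a b + pnorm c d := abs_of_nonneg (add_nonneg (pnorm_nonneg _ _) (pnorm_nonneg _ _))

lemma quad_nonneg_imp (A B : ℝ) (hB : 0 ≤ B)
    (h : ∀ t : ℝ, 0 < t → t ≤ 1 → 0 ≤ A * t + B * t ^ 2) : 0 ≤ A := by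
  by_contra hA
  push_neg at hA
  set t := min 1 (-A / (2 * B + 1)) with ht
  have htpos : 0 < t := lt_min one_pos (div_pos (neg_pos.mpr hA) (by positivity))
  have ht1 : t ≤ 1 := min_le_left _ _
  have h2 : t ≤ -A / (2 * B + 1) := min_le_right _ _
  have h3 : t * (2 * B + 1) ≤ -A := by
    rw [← le_div_iff₀ (by positivity : (0:ℝ) < 2 * B + 1)]; exact h2
  have h4 := h t htpos ht1
  nlinarith [mul_pos htpos htpos, mul_nonneg hB htpos.le]

lemma vi_lemma {k : ℕ} (μ : ℝ) (hμ : 0 ≤ μ) (c a xh : Fin k → ℝ)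
    (hxh : xh ∈ stdSimplex ℝ (Fin k))
    (hmin : ∀ x ∈ stdSimplex ℝ (Fin k),
      dotp c xh + μ / 2 * sqnorm (xh - a) ≤ dotp c x + μ / 2 * sqnorm (x - a)) :
    ∀ x ∈ stdSimplex ℝ (Fin k), 0 ≤ dotp c (x - xh) + μ * dotp (xh - a) (x - xh) := by
  intro x hx
  apply quad_nonneg_imp _ (μ / 2 * sqnorm (x - xh))
  · exact mul_nonneg (by linarith) (sqnorm_nonneg _)
  intro t ht0 ht1
  have hz : xh + t • (x - xh) ∈ stdSimplex ℝ (Fin k) := by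
    have hc := convex_stdSimplex ℝ (Fin k) hxh hx (by linarith : (0:ℝ) ≤ 1 - t) ht0.le (by ring)
    have : (1 - t) • xh + t • x = xh + t • (x - xh) := by
      funext i; simp [Pi.add_apply, Pi.smul_apply, Pi.sub_apply, smul_eq_mul]; ring
    rwa [this] at hc
  have hm := hmin _ hz
  have e1 : dotp c (xh + t • (x - xh)) = dotp c xh + t * dotp c (x - xh) := by
    unfold dotp
    rw [Finset.mul_sum, ← Finset.sum_add_distrib]
    exact Finset.sum_congr rfl fun i _ => by
      simp [Pi.add_apply, Pi.smul_apply, Pi.sub_apply, smul_eq_mul]; ring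
  have e2 : sqnorm (xh + t • (x - xh) - a)
      = sqnorm (xh - a) + 2 * t * dotp (xh - a) (x - xh) + t ^ 2 * sqnorm (x - xh) := by
    unfold sqnorm dotp
    rw [Finset.mul_sum, Finset.mul_sum, ← Finset.sum_add_distrib, ← Finset.sum_add_distrib]
    exact Finset.sum_congr rfl fun i _ => by
      simp [Pi.add_apply, Pi.smul_apply, Pi.sub_apply, smul_eq_mul]; ring
  rw [e1, e2] at hm
  nlinarith [hm]

lemma dotp_sub_right {k : ℕ} (c a b : Fin k → ℝ) : dotp c (a - b) = dotp c a - dotp c b := by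
  unfold dotp; rw [← Finset.sum_sub_distrib]
  exact Finset.sum_congr rfl fun i _ => by simp [Pi.sub_apply]; ring

lemma dotp_sub_left {k : ℕ} (a b c : Fin k → ℝ) : dotp (a - b) c = dotp a c - dotp b c := by
  unfold dotp; rw [← Finset.sum_sub_distrib]
  exact Finset.sum_congr rfl fun i _ => by simp [Pi.sub_apply]; ring

lemma payoff_eq_dotX {k l : ℕ} (U : Matrix (Fin k) (Fin l) ℝ) (z : Fin k → ℝ) (y : Fin l → ℝ) :
    payoff U z y = ∑ i, z i * (∑ j, U i j * y j) := by
  unfold payoff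
  refine Finset.sum_congr rfl fun i _ => ?_
  rw [Finset.mul_sum]
  exact Finset.sum_congr rfl fun j _ => by ring

lemma payoff_eq_dotY {k l : ℕ} (U : Matrix (Fin k) (Fin l) ℝ) (z : Fin k → ℝ) (y : Fin l → ℝ) :
    payoff U z y = ∑ j, (∑ i, z i * U i j) * y j := by
  unfold payoff
  rw [Finset.sum_comm]
  exact Finset.sum_congr rfl fun j _ => (Finset.sum_mul _ _ _).symm

lemma saddle_closer {n m : ℕ} (U : Matrix (Fin n) (Fin m) ℝ) (μ : ℝ) (hμ : 0 < μ)
    (xs : Fin n → ℝ) (ys : Fin m → ℝ) (hNE : IsNash U xs ys)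
    (xr : Fin n → ℝ) (yr : Fin m → ℝ) (sx : Fin n → ℝ) (sy : Fin m → ℝ)
    (hsad : IsSaddle U μ xr yr sx sy) :
    pnorm (xs - sx) (ys - sy) ≤ pnorm (xs - xr) (ys - yr) := by
  obtain ⟨hsx, hsy, hYside, hXside⟩ := hsad
  obtain ⟨hxs, hys, hNx, hNy⟩ := hNE
  have epx : ∀ z : Fin n → ℝ,
      payoff U z sy = - dotp (fun i => -(∑ j, U i j * sy j)) z := by
    intro z
    rw [payoff_eq_dotX]
    unfold dotp
    rw [← Finset.sum_neg_distrib]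
    refine Finset.sum_congr rfl fun i _ => ?_
    show z i * (∑ j, U i j * sy j) = -(-(∑ j, U i j * sy j) * z i)
    ring
  have epy : ∀ z : Fin m → ℝ,
      payoff U sx z = dotp (fun j => ∑ i, sx i * U i j) z := by
    intro z
    rw [payoff_eq_dotY]
    unfold dotp
    refine Finset.sum_congr rfl fun j _ => ?_
    show (∑ i, sx i * U i j) * z j = (∑ i, sx i * U i j) * z j
    rfl
  have hminx : ∀ x ∈ stdSimplex ℝ (Fin n),
      dotp (fun i => -(∑ j, U i j * sy j)) sx + μ / 2 * sqnorm (sx - xr) ≤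
      dotp (fun i => -(∑ j, U i j * sy j)) x + μ / 2 * sqnorm (x - xr) := by
    intro x hx
    have h := hXside x hx
    unfold sccpObj at h
    have e1 := epx sx
    have e2 := epx x
    linarith
  have hminy : ∀ y ∈ stdSimplex ℝ (Fin m),
      dotp (fun j => ∑ i, sx i * U i j) sy + μ / 2 * sqnorm (sy - yr) ≤
      dotp (fun j => ∑ i, sx i * U i j) y + μ / 2 * sqnorm (y - yr) := by
    intro y hy
    have h := hYside y hy
    unfold sccpObj at h
    have e1 := epy sy
    have e2 := epy y
    linarith
  have vix := vi_lemma μ hμ.le _ xr sx hsx hminx xs hxs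
  have viy := vi_lemma μ hμ.le _ yr sy hsy hminy ys hys
  have idx : dotp (fun i => -(∑ j, U i j * sy j)) (xs - sx)
      = payoff U sx sy - payoff U xs sy := by
    rw [dotp_sub_right, epx sx, epx xs]; ring
  have idy : dotp (fun j => ∑ i, sx i * U i j) (ys - sy)
      = payoff U sx ys - payoff U sx sy := by
    rw [dotp_sub_right, epy sy, epy ys]
  have hn1 := hNx sx hsx
  have hn2 := hNy sy hsy
  have hS : 0 ≤ dotp (sx - xr) (xs - sx) + dotp (sy - yr) (ys - sy) := by
    have hmuS : 0 ≤ μ * (dotp (sx - xr) (xs - sx) + dotp (sy - yr) (ys - sy)) := by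
      rw [idx] at vix; rw [idy] at viy
      nlinarith
    exact nonneg_of_mul_nonneg_right hmuS hμ
  have e1 : dotp (sx - xr) (xs - sx)
      = dotp (xs - xr) (xs - sx) - dotp (xs - sx) (xs - sx) := by
    rw [← dotp_sub_left]
    congr 1
    funext i
    simp only [Pi.sub_apply]
    ring
  have e2 : dotp (sy - yr) (ys - sy)
      = dotp (ys - yr) (ys - sy) - dotp (ys - sy) (ys - sy) := by
    rw [← dotp_sub_left]
    congr 1
    funext j
    simp only [Pi.sub_apply]
    ring
  have hS' : dotp (xs - sx) (xs - sx) + dotp (ys - sy) (ys - sy) ≤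
      dotp (xs - xr) (xs - sx) + dotp (ys - yr) (ys - sy) := by
    rw [e1, e2] at hS; linarith
  have hcs := cs2 (xs - xr) (xs - sx) (ys - yr) (ys - sy)
  have hq : pnorm (xs - sx) (ys - sy) ^ 2 = sqnorm (xs - sx) + sqnorm (ys - sy) :=
    Real.sq_sqrt (add_nonneg (sqnorm_nonneg _) (sqnorm_nonneg _))
  have h1 := sqnorm_eq_dotp (xs - sx)
  have h2 := sqnorm_eq_dotp (ys - sy)
  have key : pnorm (xs - sx) (ys - sy) ^ 2 ≤
      pnorm (xs - xr) (ys - yr) * pnorm (xs - sx) (ys - sy) := by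
    rw [hq, h1, h2]; linarith
  rcases eq_or_lt_of_le (pnorm_nonneg (xs - sx) (ys - sy)) with h0 | h0
  · rw [← h0]; exact pnorm_nonneg _ _
  · nlinarith [key, h0]

/-- Linear last-iterate convergence with halving exploitability of references. -/
theorem linear_convergence_with_halving_references
    {n m : ℕ} (hn : 0 < n) (hm : 0 < m)
    (U : Matrix (Fin n) (Fin m) ℝ) (μ : ℝ) (hμ : 0 < μ)
    (xs : Fin n → ℝ) (ys : Fin m → ℝ) (hNE : IsNash U xs ys)
    (C : ℝ) (hC : 0 < C)
    (hMS : ∀ x ∈ stdSimplex ℝ (Fin n), ∀ y ∈ stdSimplex ℝ (Fin m),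
      C * pnorm (xs - x) (ys - y) ≤ exploit U x y)
    (xr : ℕ → Fin n → ℝ) (yr : ℕ → Fin m → ℝ)
    (hxr : ∀ k : ℕ, xr k ∈ stdSimplex ℝ (Fin n))
    (hyr : ∀ k : ℕ, yr k ∈ stdSimplex ℝ (Fin m))
    (hhalf : ∀ k : ℕ, 2 ≤ k →
      exploit U (xr k) (yr k) ≤ exploit U (xr (k - 1)) (yr (k - 1)) / 2)
    (sx : ℕ → Fin n → ℝ) (sy : ℕ → Fin m → ℝ)
    (hsad : ∀ k : ℕ, 1 ≤ k → IsSaddle U μ (xr k) (yr k) (sx k) (sy k)) :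
    ∀ k : ℕ, 1 ≤ k → ∀ x ∈ stdSimplex ℝ (Fin n), ∀ y ∈ stdSimplex ℝ (Fin m),
      pnorm (xs - x) (ys - y) ≤
        exploit U (xr 1) (yr 1) / (C * 2 ^ (k - 1)) + pnorm (sx k - x) (sy k - y) := by
  intro k hk x hx y hy
  have hE : ∀ j : ℕ, 1 ≤ j →
      exploit U (xr j) (yr j) ≤ exploit U (xr 1) (yr 1) / 2 ^ (j - 1) := by
    intro j hj
    induction j, hj using Nat.le_induction with
    | base => simp
    | succ p hp ih =>
      have h := hhalf (p + 1) (by omega)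
      simp only [Nat.add_sub_cancel] at h
      calc exploit U (xr (p + 1)) (yr (p + 1)) ≤ exploit U (xr p) (yr p) / 2 := h
        _ ≤ exploit U (xr 1) (yr 1) / 2 ^ (p - 1) / 2 := by linarith
        _ = exploit U (xr 1) (yr 1) / 2 ^ (p + 1 - 1) := by
            rw [div_div, ← pow_succ, Nat.add_sub_cancel]
            congr 2
            omega
  have h1 := hMS (xr k) (hxr k) (yr k) (hyr k)
  have h2 := saddle_closer U μ hμ xs ys hNE (xr k) (yr k) (sx k) (sy k) (hsad k hk)
  have h3 : C * pnorm (xs - sx k) (ys - sy k) ≤ exploit U (xr 1) (yr 1) / 2 ^ (k - 1) :=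
    calc C * pnorm (xs - sx k) (ys - sy k)
        ≤ C * pnorm (xs - xr k) (ys - yr k) := mul_le_mul_of_nonneg_left h2 hC.le
      _ ≤ exploit U (xr k) (yr k) := h1
      _ ≤ _ := hE k hk
  have h4 : pnorm (xs - sx k) (ys - sy k) ≤ exploit U (xr 1) (yr 1) / (C * 2 ^ (k - 1)) := by
    rw [le_div_iff₀ (by positivity : (0:ℝ) < C * 2 ^ (k - 1))]
    have h5 := (le_div_iff₀ (by positivity : (0:ℝ) < (2:ℝ) ^ (k - 1))).mp h3
    calc pnorm (xs - sx k) (ys - sy k) * (C * 2 ^ (k - 1))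
        = C * pnorm (xs - sx k) (ys - sy k) * 2 ^ (k - 1) := by ring
      _ ≤ exploit U (xr 1) (yr 1) := h5
  have hdec1 : xs - x = (xs - sx k) + (sx k - x) := by
    funext i; simp only [Pi.sub_apply, Pi.add_apply]; ring
  have hdec2 : ys - y = (ys - sy k) + (sy k - y) := by
    funext j; simp only [Pi.sub_apply, Pi.add_apply]; ring
  have htri : pnorm (xs - x) (ys - y) ≤
      pnorm (xs - sx k) (ys - sy k) + pnorm (sx k - x) (sy k - y) := by
    rw [hdec1, hdec2]; exact pnorm_triangle _ _ _ _
  linarith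
end
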